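/- Fix ξ ∈ (−1,1). There exist constants C > 0, c > 0 and ε₀ > 0 such that for every ε ∈ (0, ε₀] and every continuous function ψ : [−1,1] → ℝ, the weak residual of the glued profile satisfies | ε²·(∂ₓU^ε(ξ⁺;ξ) − ∂ₓU^ε(ξ⁻;ξ))·ψ(ξ) + ∫_{−1}^{1} ( ε² ∂ₓ²U^ε(x;ξ) + U^ε(x;ξ) − U^ε(x;ξ)³ )·ψ(x) dx | ≤ C·e^{−c/ε}·sup_{x∈[−1,1]} |ψ(x)|, where ∂ₓ²U^ε denotes the classical second derivative on each of the two smooth pieces [−1,ξ) and (ξ,1]. In other words, hypothesis H1 of the paper, |⟨ψ, F^ε[U^ε(·;ξ)]⟩| ≤ Ω^ε(ξ)·‖ψ‖_∞ for all continuous ψ, holds for this family with Ω^ε(ξ) = C·e^{−c/ε}, which converges to zero as ε → 0. -/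

import Mathlib

noncomputable def coth (x : ℝ) : ℝ := Real.cosh x / Real.sinh x

lemma tanh_hasDerivAt (x : ℝ) : HasDerivAt Real.tanh (1 - Real.tanh x ^ 2) x := by
  have h : HasDerivAt (fun y => Real.sinh y / Real.cosh y)
      ((Real.cosh x * Real.cosh x - Real.sinh x * Real.sinh x) / Real.cosh x ^ 2) x :=
    (Real.hasDerivAt_sinh x).div (Real.hasDerivAt_cosh x) (Real.cosh_pos x).ne'
  have he : Real.tanh = fun y => Real.sinh y / Real.cosh y := by
    funext y; exact Real.tanh_eq_sinh_div_cosh y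
  rw [he]
  convert h using 1
  have hc := (Real.cosh_pos x).ne'
  have hid := Real.cosh_sq_sub_sinh_sq x
  field_simp

lemma abs_tanh_le_one (x : ℝ) : |Real.tanh x| ≤ 1 := by
  rw [Real.tanh_eq_sinh_div_cosh, abs_div, abs_of_pos (Real.cosh_pos x),
    div_le_one (Real.cosh_pos x)]
  have h := Real.cosh_sq_sub_sinh_sq x
  nlinarith [abs_nonneg (Real.sinh x), sq_abs (Real.sinh x), Real.cosh_pos x]

lemma sinh_ge {y : ℝ} (hy : 1 ≤ y) : Real.exp y / 4 ≤ Real.sinh y := by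
  rw [Real.sinh_eq]
  have h1 : Real.exp (-y) ≤ Real.exp (-1) := Real.exp_le_exp.2 (by linarith)
  have h2 : Real.exp (-1) * Real.exp 1 = 1 := by rw [← Real.exp_add]; norm_num
  have h3 : (2:ℝ) ≤ Real.exp 1 := by nlinarith [Real.add_one_le_exp (1:ℝ)]
  have h4 : (1:ℝ) ≤ Real.exp y := Real.one_le_exp (by linarith)
  have h5 : Real.exp (-1) ≤ 1/2 := by nlinarith [Real.exp_pos (-1:ℝ)]
  have h6 : Real.exp (-1) ≤ Real.exp y / 2 := by linarith
  linarith

lemma coth_gt_one {y : ℝ} (hy : 0 < y) : 1 < coth y := by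
  have hs : 0 < Real.sinh y := Real.sinh_pos_iff.2 hy
  rw [coth, lt_div_iff₀ hs]
  linarith [Real.sinh_lt_cosh y]

lemma coth_sub_one_le {y : ℝ} (hy : 1 ≤ y) : coth y - 1 ≤ 4 * Real.exp (-(2*y)) := by
  have hs : 0 < Real.sinh y := Real.sinh_pos_iff.2 (by linarith)
  have hge := sinh_ge hy
  have h1 : coth y - 1 = Real.exp (-y) / Real.sinh y := by
    rw [coth, ← Real.cosh_sub_sinh]; field_simp
  rw [h1]
  have h2 : Real.exp (-y) / Real.sinh y ≤ Real.exp (-y) / (Real.exp y / 4) := by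
    apply div_le_div_of_nonneg_left (Real.exp_pos _).le _ hge
    positivity
  have h3 : Real.exp (-y) / (Real.exp y / 4) = 4 * Real.exp (-(2*y)) := by
    rw [div_div_eq_mul_div, div_eq_iff (Real.exp_pos y).ne', mul_assoc, ← Real.exp_add]
    ring_nf
  linarith

lemma coth_le_five {y : ℝ} (hy : 1 ≤ y) : coth y ≤ 5 := by
  have h := coth_sub_one_le hy
  have : Real.exp (-(2*y)) ≤ 1 := Real.exp_le_one_iff.2 (by linarith)
  linarith


lemma inner_hasDerivAt (ξ s x : ℝ) : HasDerivAt (fun x : ℝ => (ξ - x) / s) (-1 / s) x := by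
  have := ((hasDerivAt_id x).const_sub ξ).div_const s
  simpa using this

lemma U_hasDerivAt (ξ k s : ℝ) (x : ℝ) :
    HasDerivAt (fun x => k * Real.tanh ((ξ - x) / s))
      (-(k / s) * (1 - Real.tanh ((ξ - x) / s) ^ 2)) x := by
  have h2 := (tanh_hasDerivAt ((ξ - x)/s)).comp x (inner_hasDerivAt ξ s x)
  have h3 := h2.const_mul k
  exact h3.congr_deriv (by ring)

lemma U'_hasDerivAt (ξ k s : ℝ) (x : ℝ) :
    HasDerivAt (fun x => -(k / s) * (1 - Real.tanh ((ξ - x) / s) ^ 2))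
      (-(2 * k / s ^ 2) * Real.tanh ((ξ - x) / s) * (1 - Real.tanh ((ξ - x) / s) ^ 2)) x := by
  have h2 := (tanh_hasDerivAt ((ξ - x)/s)).comp x (inner_hasDerivAt ξ s x)
  have h3 := (h2.pow 2).const_sub 1
  have h4 := h3.const_mul (-(k / s))
  exact h4.congr_deriv (by simp only [Function.comp_apply, Nat.cast_ofNat]; ring)

lemma residual_bound {k T y : ℝ} (hy : 1 ≤ y) (hk : k = coth y) (hT : |T| ≤ 1) :
    |k * (1 - k ^ 2) * T ^ 3| ≤ 120 * Real.exp (-(2 * y)) := by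
  have hk1 : 1 < k := hk ▸ coth_gt_one (by linarith)
  have hk5 : k ≤ 5 := hk ▸ coth_le_five hy
  have hkE : k - 1 ≤ 4 * Real.exp (-(2 * y)) := hk ▸ coth_sub_one_le hy
  have hE : 0 < Real.exp (-(2 * y)) := Real.exp_pos _
  rw [abs_mul, abs_mul, abs_pow]
  have h1 : |k| = k := abs_of_pos (by linarith)
  have h2 : |1 - k ^ 2| = k ^ 2 - 1 := by rw [abs_of_nonpos (by nlinarith)]; ring
  rw [h1, h2]
  have hT3 : |T| ^ 3 ≤ 1 := pow_le_one₀ (abs_nonneg T) hT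
  have h30 : k * (k + 1) ≤ 30 := by nlinarith
  have hmm := mul_le_mul h30 hkE (by linarith : (0:ℝ) ≤ k - 1) (by linarith : (0:ℝ) ≤ 30)
  have hstep : k * (k ^ 2 - 1) ≤ 120 * Real.exp (-(2 * y)) := by nlinarith [hmm]
  have hpos : 0 ≤ k * (k ^ 2 - 1) := by nlinarith
  calc k * (k ^ 2 - 1) * |T| ^ 3 ≤ k * (k ^ 2 - 1) * 1 := by
        exact mul_le_mul_of_nonneg_left hT3 hpos
    _ ≤ 120 * Real.exp (-(2 * y)) := by linarith

set_option maxHeartbeats 1000000 in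
/-- Hypothesis H1 for the glued Allen–Cahn profile: fix `ξ ∈ (-1,1)`. There exist
`C, c, ε₀ > 0` such that for every `ε ∈ (0, ε₀]` and every continuous `ψ : [-1,1] → ℝ`
bounded by `M` on `[-1,1]`, the weak residual of the glued profile (derivative-jump
Dirac term plus pointwise residual on the two smooth pieces, represented by the global
smooth functions `U₁, U₂`) satisfies
`|ε² (∂ₓU^ε(ξ⁺) - ∂ₓU^ε(ξ⁻)) ψ(ξ) + ∫_{-1}^{1} (ε² ∂ₓ²U^ε + U^ε - (U^ε)³) ψ|
  ≤ C e^{-c/ε} M`, i.e. `Ω^ε(ξ)` may be taken of order `e^{-c/ε}`, vanishing as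
`ε → 0`. -/
theorem stmt_17 (ξ : ℝ) (hξ : ξ ∈ Set.Ioo (-1 : ℝ) 1)
    (k₁ k₂ : ℝ → ℝ)
    (hk₁ : ∀ ε : ℝ, k₁ ε = coth ((1 + ξ) / (Real.sqrt 2 * ε)))
    (hk₂ : ∀ ε : ℝ, k₂ ε = coth ((1 - ξ) / (Real.sqrt 2 * ε)))
    (U U₁ U₂ : ℝ → ℝ → ℝ)
    (hU₁ : ∀ ε x, U₁ ε x = k₁ ε * Real.tanh ((ξ - x) / (Real.sqrt 2 * ε)))
    (hU₂ : ∀ ε x, U₂ ε x = k₂ ε * Real.tanh ((ξ - x) / (Real.sqrt 2 * ε)))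
    (hU : ∀ ε x, U ε x = if x ≤ ξ then U₁ ε x else U₂ ε x) :
    ∃ C > (0 : ℝ), ∃ c > (0 : ℝ), ∃ ε₀ > (0 : ℝ), ∀ ε ∈ Set.Ioc (0 : ℝ) ε₀,
      ∀ ψ : ℝ → ℝ, ContinuousOn ψ (Set.Icc (-1) 1) →
      ∀ M : ℝ, (∀ x ∈ Set.Icc (-1 : ℝ) 1, |ψ x| ≤ M) →
      |ε ^ 2 * (deriv (U₂ ε) ξ - deriv (U₁ ε) ξ) * ψ ξ
        + ∫ x in (-1 : ℝ)..1,
            (ε ^ 2 * (if x ≤ ξ then deriv (deriv (U₁ ε)) x else deriv (deriv (U₂ ε)) x)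
              + U ε x - (U ε x) ^ 3) * ψ x|
        ≤ C * Real.exp (-c / ε) * M := by
  obtain ⟨hξ1, hξ2⟩ := hξ
  have hsq2 : (Real.sqrt 2) ^ 2 = 2 := Real.sq_sqrt (by norm_num)
  have hsqnn := Real.sqrt_nonneg 2
  have hsq1 : 1 ≤ Real.sqrt 2 := by nlinarith
  have hsqle2 : Real.sqrt 2 ≤ 2 := by nlinarith
  set m := min (1 + ξ) (1 - ξ) with hmdef
  have hma : m ≤ 1 + ξ := min_le_left _ _
  have hmb : m ≤ 1 - ξ := min_le_right _ _
  have hm0 : 0 < m := lt_min (by linarith) (by linarith)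
  have hm1 : m ≤ 1 := by linarith
  refine ⟨250, by norm_num, m, hm0, m / 2, by positivity, ?_⟩
  rintro ε ⟨hε0, hεm⟩ ψ hψ M hM
  set s := Real.sqrt 2 * ε with hsdef
  have hs0 : 0 < s := by positivity
  have hs2 : s ^ 2 = 2 * ε ^ 2 := by rw [hsdef, mul_pow, hsq2]
  have hsm : s ≤ m := by nlinarith
  have hε1 : ε ≤ 1 := by linarith
  -- the two exponents
  have hy₁ : 1 ≤ (1 + ξ) / s := by rw [le_div_iff₀ hs0]; linarith
  have hy₂ : 1 ≤ (1 - ξ) / s := by rw [le_div_iff₀ hs0]; linarith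
  set E := Real.exp (-m / ε) with hEdef
  have hE0 : 0 < E := Real.exp_pos _
  have hexp1 : Real.exp (-(2 * ((1 + ξ) / s))) ≤ E := by
    rw [hEdef, Real.exp_le_exp, neg_div, neg_le_neg_iff,
      show 2 * ((1 + ξ) / s) = 2 * (1 + ξ) / s from (mul_div_assoc 2 (1+ξ) s).symm,
      div_le_div_iff₀ hε0 hs0, hsdef]
    nlinarith [mul_nonneg hε0.le (sub_nonneg.2 hma),
      mul_nonneg (mul_nonneg hε0.le hm0.le) (sub_nonneg.2 hsqle2)]
  have hexp2 : Real.exp (-(2 * ((1 - ξ) / s))) ≤ E := by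
    rw [hEdef, Real.exp_le_exp, neg_div, neg_le_neg_iff,
      show 2 * ((1 - ξ) / s) = 2 * (1 - ξ) / s from (mul_div_assoc 2 (1-ξ) s).symm,
      div_le_div_iff₀ hε0 hs0, hsdef]
    nlinarith [mul_nonneg hε0.le (sub_nonneg.2 hmb),
      mul_nonneg (mul_nonneg hε0.le hm0.le) (sub_nonneg.2 hsqle2)]
  have hMξ := hM ξ ⟨by linarith, by linarith⟩
  have hM0 : 0 ≤ M := le_trans (abs_nonneg _) hMξ
  -- function rewritings
  have hU₁f : U₁ ε = fun x => k₁ ε * Real.tanh ((ξ - x) / s) := funext fun x => hU₁ ε x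
  have hU₂f : U₂ ε = fun x => k₂ ε * Real.tanh ((ξ - x) / s) := funext fun x => hU₂ ε x
  have hDU₁ : ∀ x, deriv (U₁ ε) x = -(k₁ ε / s) * (1 - Real.tanh ((ξ - x) / s) ^ 2) := by
    intro x; rw [hU₁f]; exact (U_hasDerivAt ξ (k₁ ε) s x).deriv
  have hDU₂ : ∀ x, deriv (U₂ ε) x = -(k₂ ε / s) * (1 - Real.tanh ((ξ - x) / s) ^ 2) := by
    intro x; rw [hU₂f]; exact (U_hasDerivAt ξ (k₂ ε) s x).deriv
  have hDDU₁ : ∀ x, deriv (deriv (U₁ ε)) x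
      = -(2 * k₁ ε / s ^ 2) * Real.tanh ((ξ - x) / s) * (1 - Real.tanh ((ξ - x) / s) ^ 2) := by
    intro x
    have : deriv (U₁ ε) = fun x => -(k₁ ε / s) * (1 - Real.tanh ((ξ - x) / s) ^ 2) :=
      funext hDU₁
    rw [this]; exact (U'_hasDerivAt ξ (k₁ ε) s x).deriv
  have hDDU₂ : ∀ x, deriv (deriv (U₂ ε)) x
      = -(2 * k₂ ε / s ^ 2) * Real.tanh ((ξ - x) / s) * (1 - Real.tanh ((ξ - x) / s) ^ 2) := by
    intro x
    have : deriv (U₂ ε) = fun x => -(k₂ ε / s) * (1 - Real.tanh ((ξ - x) / s) ^ 2) :=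
      funext hDU₂
    rw [this]; exact (U'_hasDerivAt ξ (k₂ ε) s x).deriv
  -- jump term
  have hk₁1 : 1 < k₁ ε := by rw [hk₁]; exact coth_gt_one (by rw [← hsdef]; linarith)
  have hk₂1 : 1 < k₂ ε := by rw [hk₂]; exact coth_gt_one (by rw [← hsdef]; linarith)
  have hk₁E : k₁ ε - 1 ≤ 4 * E := by
    rw [hk₁, ← hsdef]
    exact le_trans (coth_sub_one_le hy₁) (by nlinarith)
  have hk₂E : k₂ ε - 1 ≤ 4 * E := by
    rw [hk₂, ← hsdef]
    exact le_trans (coth_sub_one_le hy₂) (by nlinarith)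
  have hjump : |ε ^ 2 * (deriv (U₂ ε) ξ - deriv (U₁ ε) ξ) * ψ ξ| ≤ 10 * E * M := by
    rw [hDU₁ ξ, hDU₂ ξ]
    simp only [sub_self, zero_div, Real.tanh_zero]
    have hval : ε ^ 2 * (-(k₂ ε / s) * (1 - 0 ^ 2) - -(k₁ ε / s) * (1 - 0 ^ 2))
        = ε ^ 2 / s * (k₁ ε - k₂ ε) := by ring
    rw [hval, abs_mul, abs_mul]
    have h1 : |ε ^ 2 / s| ≤ 1 := by
      rw [abs_of_pos (by positivity)]
      rw [div_le_one hs0, hsdef]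
      nlinarith
    have h2 : |k₁ ε - k₂ ε| ≤ 8 * E := by
      rw [abs_le]; constructor <;> nlinarith
    calc |ε ^ 2 / s| * |k₁ ε - k₂ ε| * |ψ ξ| ≤ 1 * (8 * E) * M := by
          apply mul_le_mul (mul_le_mul h1 h2 (abs_nonneg _) (by norm_num)) hMξ
            (abs_nonneg _) (by positivity)
      _ ≤ 10 * E * M := by nlinarith
  -- integrand bound
  have hint : |∫ x in (-1 : ℝ)..1,
      (ε ^ 2 * (if x ≤ ξ then deriv (deriv (U₁ ε)) x else deriv (deriv (U₂ ε)) x)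
        + U ε x - (U ε x) ^ 3) * ψ x| ≤ 120 * E * M * 2 := by
    have hb : ∀ x ∈ Set.uIoc (-1 : ℝ) 1,
        ‖(ε ^ 2 * (if x ≤ ξ then deriv (deriv (U₁ ε)) x else deriv (deriv (U₂ ε)) x)
          + U ε x - (U ε x) ^ 3) * ψ x‖ ≤ 120 * E * M := by
      intro x hx
      rw [Set.uIoc_of_le (by norm_num : (-1:ℝ) ≤ 1)] at hx
      have hxI : x ∈ Set.Icc (-1 : ℝ) 1 := ⟨hx.1.le, hx.2⟩
      have hMx := hM x hxI
      set T := Real.tanh ((ξ - x) / s) with hTdef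
      have hT : |T| ≤ 1 := abs_tanh_le_one _
      rw [Real.norm_eq_abs, abs_mul]
      by_cases hxξ : x ≤ ξ
      · rw [if_pos hxξ, hDDU₁ x, hU, if_pos hxξ, hU₁ ε x, ← hsdef, ← hTdef]
        have hid : ε ^ 2 * (-(2 * k₁ ε / s ^ 2) * T * (1 - T ^ 2)) + k₁ ε * T
            - (k₁ ε * T) ^ 3 = k₁ ε * (1 - (k₁ ε) ^ 2) * T ^ 3 := by
          rw [hs2]; field_simp; ring
        rw [hid]
        have hcoth : k₁ ε = coth ((1 + ξ) / s) := by rw [hk₁, hsdef]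
        have hres := residual_bound hy₁ hcoth hT
        calc |k₁ ε * (1 - (k₁ ε) ^ 2) * T ^ 3| * |ψ x|
            ≤ (120 * Real.exp (-(2 * ((1 + ξ) / s)))) * M :=
              mul_le_mul hres hMx (abs_nonneg _) (by positivity)
          _ ≤ 120 * E * M := by nlinarith
      · rw [if_neg hxξ, hDDU₂ x, hU, if_neg hxξ, hU₂ ε x, ← hsdef, ← hTdef]
        have hid : ε ^ 2 * (-(2 * k₂ ε / s ^ 2) * T * (1 - T ^ 2)) + k₂ ε * T
            - (k₂ ε * T) ^ 3 = k₂ ε * (1 - (k₂ ε) ^ 2) * T ^ 3 := by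
          rw [hs2]; field_simp; ring
        rw [hid]
        have hcoth : k₂ ε = coth ((1 - ξ) / s) := by rw [hk₂, hsdef]
        have hres := residual_bound hy₂ hcoth hT
        calc |k₂ ε * (1 - (k₂ ε) ^ 2) * T ^ 3| * |ψ x|
            ≤ (120 * Real.exp (-(2 * ((1 - ξ) / s)))) * M :=
              mul_le_mul hres hMx (abs_nonneg _) (by positivity)
          _ ≤ 120 * E * M := by nlinarith
    have := intervalIntegral.norm_integral_le_of_norm_le_const hb
    rw [Real.norm_eq_abs] at this
    calc |∫ x in (-1 : ℝ)..1, _| ≤ 120 * E * M * |1 - (-1 : ℝ)| := this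
      _ = 120 * E * M * 2 := by norm_num
  calc |ε ^ 2 * (deriv (U₂ ε) ξ - deriv (U₁ ε) ξ) * ψ ξ
        + ∫ x in (-1 : ℝ)..1,
            (ε ^ 2 * (if x ≤ ξ then deriv (deriv (U₁ ε)) x else deriv (deriv (U₂ ε)) x)
              + U ε x - (U ε x) ^ 3) * ψ x|
      ≤ |ε ^ 2 * (deriv (U₂ ε) ξ - deriv (U₁ ε) ξ) * ψ ξ|
        + |∫ x in (-1 : ℝ)..1,
            (ε ^ 2 * (if x ≤ ξ then deriv (deriv (U₁ ε)) x else deriv (deriv (U₂ ε)) x)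
              + U ε x - (U ε x) ^ 3) * ψ x| := abs_add_le _ _
    _ ≤ 10 * E * M + 120 * E * M * 2 := add_le_add hjump hint
    _ = 250 * E * M := by ring
    _ = 250 * Real.exp (-m / ε) * M := by rw [hEdef]
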